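/- Let 𝔽 be a field, V an 𝔽-vector space, I and J totally ordered sets, (E, I) and (F, J) linear filtrations of V, and C an almost gradation of the intersection filtration (E ∩ F, I × J). Fix i ∈ I and let π : E_i → E_i / E_{<i} denote the quotient map. Then (1) the function F̄ : J → Sub(E_i / E_{<i}) defined by F̄_j = π(E_i ∩ F_j) is a linear filtration of E_i / E_{<i}, with F̄_{<j} = π(E_i ∩ F_{<j}) for all j ∈ J, and (2) the function C̄ : J → Sub(E_i / E_{<i}) defined by C̄_j = π(C_{(i,j)}) is an almost gradation of F̄. -/

import Mathlib

/-- Membership in a supremum of a monotone family over an initial segment of a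
linear order: the element is zero or lies in one of the submodules. -/
lemma stmt8_mem_biSup_lt {𝔽 V J : Type*} [Field 𝔽] [AddCommGroup V] [Module 𝔽 V]
    [LinearOrder J] {F : J → Submodule 𝔽 V} (hF : Monotone F) {j : J} {v : V}
    (hv : v ∈ ⨆ q < j, F q) : v = 0 ∨ ∃ q < j, v ∈ F q := by
  rw [iSup_subtype'] at hv
  by_cases h : Nonempty {q // q < j}
  · right
    have hdir : Directed (· ≤ ·) fun q : {q // q < j} => F q.1 := fun a b =>
      (le_total a.1 b.1).elim (fun h => ⟨b, hF h, le_rfl⟩) (fun h => ⟨a, le_rfl, hF h⟩)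
    obtain ⟨⟨q, hq⟩, hm⟩ := (Submodule.mem_iSup_of_directed _ hdir).mp hv
    exact ⟨q, hq, hm⟩
  · left
    haveI := not_nonempty_iff.mp h
    rw [iSup_of_empty] at hv
    exact (Submodule.mem_bot _).mp hv

theorem stmt8 {𝔽 V : Type*} [Field 𝔽] [AddCommGroup V] [Module 𝔽 V]
    {I J : Type*} [LinearOrder I] [LinearOrder J]
    (E : I → Submodule 𝔽 V) (F : J → Submodule 𝔽 V)
    (hEmono : Monotone E) (hEtop : ∃ p, E p = ⊤)
    (hFmono : Monotone F) (hFtop : ∃ q, F q = ⊤)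
    (C : I × J → Submodule 𝔽 V)
    (hag : ∀ x : I × J,
      E x.1 ⊓ F x.2 = (⨆ y < x, E y.1 ⊓ F y.2) ⊔ C x ∧
      (⨆ y < x, E y.1 ⊓ F y.2) ⊓ C x = ⊥)
    (i : I) :
    let K : Submodule 𝔽 (E i) := Submodule.comap (E i).subtype (⨆ p < i, E p)
    let π : (E i) →ₗ[𝔽] (E i ⧸ K) := K.mkQ
    let Fbar : J → Submodule 𝔽 (E i ⧸ K) := fun j =>
      Submodule.map π (Submodule.comap (E i).subtype (F j))
    let Cbar : J → Submodule 𝔽 (E i ⧸ K) := fun j =>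
      Submodule.map π (Submodule.comap (E i).subtype (C (i, j)))
    (Monotone Fbar ∧ (∃ j, Fbar j = ⊤) ∧
      (∀ j, (⨆ q < j, Fbar q)
        = Submodule.map π (Submodule.comap (E i).subtype (⨆ q < j, F q)))) ∧
    (∀ j, Fbar j = (⨆ q < j, Fbar q) ⊔ Cbar j ∧
      (⨆ q < j, Fbar q) ⊓ Cbar j = ⊥) := by
  intro K π Fbar Cbar
  set S := (E i).subtype with hS
  -- basic facts
  have hπ0 : ∀ x : E i, (x : V) ∈ (⨆ p < i, E p) → π x = 0 := by
    intro x hx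
    have : x ∈ K := hx
    simpa [π] using (Submodule.Quotient.mk_eq_zero K).mpr this
  have hcomapEi : Submodule.comap S (E i) = ⊤ := Submodule.comap_subtype_self (E i)
  have hcomapEF : ∀ j, Submodule.comap S (E i ⊓ F j) = Submodule.comap S (F j) := by
    intro j
    rw [Submodule.comap_inf, hcomapEi, top_inf_eq]
  -- (1c) : the formula for Fbar_{<j}
  have h3 : ∀ j, (⨆ q < j, Fbar q)
      = Submodule.map π (Submodule.comap S (⨆ q < j, F q)) := by
    intro j
    apply le_antisymm
    · refine iSup₂_le fun q hq => ?_
      exact Submodule.map_mono (Submodule.comap_mono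
        (le_iSup₂ (f := fun q (_ : q < j) => F q) q hq))
    · rintro v ⟨y, hy, rfl⟩
      rcases stmt8_mem_biSup_lt hFmono hy with h0 | ⟨q, hq, hm⟩
      · have : y = 0 := Subtype.ext h0
        simp [this]
      · exact le_iSup₂ (f := fun q (_ : q < j) => Fbar q) q hq
          ⟨y, hm, rfl⟩
  -- key : π(comap S Glt(i,j)) = ⨆ q<j, Fbar q
  have h5 : ∀ j, Submodule.map π
      (Submodule.comap S (⨆ y < (i, j), E y.1 ⊓ F y.2)) = ⨆ q < j, Fbar q := by
    intro j
    apply le_antisymm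
    · rintro v ⟨y, hy, rfl⟩
      -- Glt ≤ (⨆ p<i, E p) ⊔ (⨆ q<j, E i ⊓ F q)
      have hGle : (⨆ x < (i, j), E x.1 ⊓ F x.2)
          ≤ (⨆ p < i, E p) ⊔ (⨆ q < j, E i ⊓ F q) := by
        refine iSup₂_le fun x hx => ?_
        rcases Prod.lt_iff.mp hx with ⟨h1, _⟩ | ⟨h1, h2⟩
        · exact le_trans inf_le_left
            (le_trans (le_iSup₂ (f := fun p (_ : p < i) => E p) x.1 h1) le_sup_left)
        · refine le_trans (inf_le_inf (hEmono h1) le_rfl) ?_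
          exact le_trans (le_iSup₂ (f := fun q (_ : q < j) => E i ⊓ F q) x.2 h2)
            le_sup_right
      have hy' := hGle hy
      rw [Submodule.mem_sup] at hy'
      obtain ⟨a, ha, b, hb, hab⟩ := hy'
      have hBle : (⨆ q < j, E i ⊓ F q) ≤ E i := iSup₂_le fun q _ => inf_le_left
      have hbEi : b ∈ E i := hBle hb
      have haEi : a ∈ E i := by
        have : a = (y : V) - b := eq_sub_of_add_eq hab
        rw [this]; exact sub_mem y.2 hbEi
      have hysplit : y = (⟨a, haEi⟩ : E i) + ⟨b, hbEi⟩ := by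
        apply Subtype.ext; simpa [hS] using hab.symm
      have hπa : π ⟨a, haEi⟩ = 0 := hπ0 _ ha
      have hπb : π (⟨b, hbEi⟩ : E i) ∈ ⨆ q < j, Fbar q := by
        rcases stmt8_mem_biSup_lt (fun q q' h => inf_le_inf le_rfl (hFmono h)) hb with
          h0 | ⟨q, hq, hm⟩
        · have : (⟨b, hbEi⟩ : E i) = 0 := Subtype.ext h0
          simp [this]
        · exact le_iSup₂ (f := fun q (_ : q < j) => Fbar q) q hq
            ⟨⟨b, hbEi⟩, hm.2, rfl⟩
      rw [hysplit, map_add, hπa, zero_add]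
      exact hπb
    · refine iSup₂_le fun q hq => ?_
      have : Fbar q = Submodule.map π (Submodule.comap S (E i ⊓ F q)) := by
        rw [hcomapEF]
      rw [this]
      refine Submodule.map_mono (Submodule.comap_mono ?_)
      exact le_iSup₂ (f := fun y (_ : y < (i, j)) => E y.1 ⊓ F y.2) (i, q)
        (Prod.lt_iff.mpr (Or.inr ⟨le_rfl, hq⟩))
  refine ⟨⟨fun j j' h => Submodule.map_mono (Submodule.comap_mono (hFmono h)), ?_, h3⟩, ?_⟩
  · obtain ⟨j, hj⟩ := hFtop
    refine ⟨j, ?_⟩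
    have : Submodule.comap S (F j) = ⊤ := by rw [hj]; exact Submodule.comap_top S
    rw [show Fbar j = Submodule.map π (Submodule.comap S (F j)) from rfl, this,
      Submodule.map_top, Submodule.range_mkQ]
  · intro j
    obtain ⟨hdec, hdisj⟩ := hag (i, j)
    have hGltle : (⨆ y < (i, j), E y.1 ⊓ F y.2) ≤ E i ⊓ F j := by
      refine iSup₂_le fun y hy => ?_
      obtain ⟨h1, h2⟩ := Prod.le_def.mp hy.le
      exact inf_le_inf (hEmono h1) (hFmono h2)
    have hCle : C (i, j) ≤ E i ⊓ F j := le_sup_right.trans hdec.ge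
    constructor
    · -- Fbar j = Fbar_{<j} ⊔ Cbar j
      have hcomap_sup : Submodule.comap S ((⨆ y < (i, j), E y.1 ⊓ F y.2) ⊔ C (i, j))
          = Submodule.comap S (⨆ y < (i, j), E y.1 ⊓ F y.2)
            ⊔ Submodule.comap S (C (i, j)) := by
        apply le_antisymm
        · intro x hx
          rw [Submodule.mem_comap, Submodule.mem_sup] at hx
          obtain ⟨a, ha, c, hc, hac⟩ := hx
          have haEi : a ∈ E i := (hGltle ha).1
          have hcEi : c ∈ E i := (hCle hc).1
          rw [Submodule.mem_sup]
          refine ⟨⟨a, haEi⟩, ha, ⟨c, hcEi⟩, hc, ?_⟩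
          apply Subtype.ext; simpa [hS] using hac
        · exact sup_le (Submodule.comap_mono le_sup_left)
            (Submodule.comap_mono le_sup_right)
      calc Fbar j = Submodule.map π (Submodule.comap S (E i ⊓ F j)) := by
            rw [hcomapEF]
        _ = Submodule.map π (Submodule.comap S
              ((⨆ y < (i, j), E y.1 ⊓ F y.2) ⊔ C (i, j))) := by rw [← hdec]
        _ = (⨆ q < j, Fbar q) ⊔ Cbar j := by
            rw [hcomap_sup, Submodule.map_sup, h5]
    · -- disjointness
      rw [eq_bot_iff]
      rintro v ⟨hv1, hv2⟩
      rw [← h5 j] at hv1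
      obtain ⟨x, hx, hxv⟩ := hv1
      obtain ⟨y, hy, hyv⟩ := hv2
      have hxy : π (x - y) = 0 := by rw [map_sub, hxv, hyv, sub_self]
      have hk : (x : V) - (y : V) ∈ (⨆ p < i, E p) := by
        have : x - y ∈ K := (Submodule.Quotient.mk_eq_zero K).mp hxy
        exact this
      have hxFj : (x : V) ∈ F j := (hGltle hx).2
      have hyFj : (y : V) ∈ F j := (hCle hy).2
      have hkFj : (x : V) - (y : V) ∈ F j := sub_mem hxFj hyFj
      have hyG : (y : V) ∈ (⨆ z < (i, j), E z.1 ⊓ F z.2) := by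
        rcases stmt8_mem_biSup_lt hEmono hk with h0 | ⟨p, hp, hm⟩
        · have : (y : V) = (x : V) := by
            have := sub_eq_zero.mp h0; exact this.symm
          rw [this]; exact hx
        · have : (y : V) = (x : V) - ((x : V) - (y : V)) := (sub_sub_cancel _ _).symm
          rw [this]
          have hxG : (x : V) ∈ (⨆ z < (i, j), E z.1 ⊓ F z.2) := hx
          have hkG : (x : V) - (y : V) ∈ (⨆ z < (i, j), E z.1 ⊓ F z.2) := by
            have hmem : (x : V) - (y : V) ∈ E p ⊓ F j := ⟨hm, hkFj⟩
            exact le_iSup₂ (f := fun z (_ : z < (i, j)) => E z.1 ⊓ F z.2) (p, j)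
              (Prod.lt_iff.mpr (Or.inl ⟨hp, le_rfl⟩)) hmem
          exact sub_mem hxG hkG
      have : (y : V) ∈ ((⨆ z < (i, j), E z.1 ⊓ F z.2) ⊓ C (i, j)) := ⟨hyG, hy⟩
      rw [hdisj] at this
      have hy0 : y = 0 := Subtype.ext ((Submodule.mem_bot _).mp this)
      rw [Submodule.mem_bot, ← hyv, hy0, map_zero]
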